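/- Let C ≠ {1} be a finite maximal prefix-free set in {a,b}* with associated prefix-closed set P of proper prefixes, C_a the words of C ending in a, and P_b = {1} ∪ (P ∩ {a,b}*b). Then the map sending w ∈ C_a to the unique p ∈ P_b with w ∈ p a* is a bijection from C_a onto P_b. -/

import Mathlib

/-- A set of words is prefix-free if no element is a proper prefix of another.
The letter `a` is `false` and the letter `b` is `true`. -/
def PrefixFree (C : Set (List Bool)) : Prop :=
  ∀ u ∈ C, ∀ v ∈ C, u <+: v → u = v

/-- The set of proper prefixes of elements of C. -/
def Pset (C : Set (List Bool)) : Set (List Bool) :=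
  {p | ∃ c ∈ C, p <+: c ∧ p ≠ c}

/-- Words of C ending with the letter a (= false). -/
def Ca (C : Set (List Bool)) : Set (List Bool) :=
  {w ∈ C | ∃ u : List Bool, w = u ++ [false]}

/-- P_b = {1} ∪ (P ∩ {a,b}*b). -/
def Pb (C : Set (List Bool)) : Set (List Bool) :=
  insert [] {p ∈ Pset C | ∃ u : List Bool, p = u ++ [true]}

/-- The "strip trailing a's" function. -/
def stripA (w : List Bool) : List Bool :=
  (w.reverse.dropWhile (fun x => !x)).reverse

lemma dropWhile_head' {p : Bool → Bool} {l : List Bool} {x : Bool} {xs : List Bool}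
    (h : l.dropWhile p = x :: xs) : p x = false := by
  induction l with
  | nil => simp [List.dropWhile] at h
  | cons y ys ih =>
    rw [List.dropWhile_cons] at h
    by_cases hy : p y = true
    · rw [if_pos hy] at h; exact ih h
    · rw [if_neg hy] at h
      obtain ⟨rfl, rfl⟩ : y = x ∧ ys = xs := by
        exact ⟨(List.cons.injEq ..).mp h |>.1, (List.cons.injEq ..).mp h |>.2⟩
      simpa using hy

/-- Stripping trailing a's from `p ++ a^m` gives back `p` when `p` doesn't end in a. -/
lemma stripA_spec (p : List Bool) (m : ℕ) (hp : p = [] ∨ ∃ u, p = u ++ [true]) :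
    stripA (p ++ List.replicate m false) = p := by
  unfold stripA
  rw [List.reverse_append, List.reverse_replicate]
  have h1 : List.dropWhile (fun x => !x) (List.replicate m false ++ p.reverse)
      = List.dropWhile (fun x => !x) p.reverse := by
    induction m with
    | zero => simp
    | succ n ih => rw [List.replicate_succ, List.cons_append, List.dropWhile_cons]; simp [ih]
  rw [h1]
  have h2 : List.dropWhile (fun x => !x) p.reverse = p.reverse := by
    rcases hp with rfl | ⟨u, rfl⟩
    · simp
    · rw [List.reverse_append]
      simp [List.dropWhile_cons]
  rw [h2, List.reverse_reverse]

/-- Every word is `stripA w ++ a^m`, and `stripA w` is empty or ends in b. -/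
lemma stripA_decomp (w : List Bool) :
    (∃ m, w = stripA w ++ List.replicate m false) ∧
      (stripA w = [] ∨ ∃ u, stripA w = u ++ [true]) := by
  have hsplit := (List.takeWhile_append_dropWhile :
    List.takeWhile (fun x : Bool => !x) w.reverse ++ List.dropWhile (fun x : Bool => !x) w.reverse = w.reverse)
  have htake : w.reverse.takeWhile (fun x => !x)
      = List.replicate (w.reverse.takeWhile (fun x => !x)).length false := by
    apply List.eq_replicate_of_mem
    intro b hb
    have := List.mem_takeWhile_imp hb
    simpa using this
  obtain ⟨k, hk⟩ : ∃ k, w.reverse.takeWhile (fun x => !x) = List.replicate k false :=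
    ⟨_, htake⟩
  constructor
  · refine ⟨k, ?_⟩
    conv_lhs => rw [← w.reverse_reverse, ← hsplit]
    rw [List.reverse_append, hk, List.reverse_replicate]
    rfl
  · rcases hd : w.reverse.dropWhile (fun x => !x) with _ | ⟨x, xs⟩
    · left; simp [stripA, hd]
    · right
      have hx := dropWhile_head' hd
      have hx' : x = true := by simpa using hx
      refine ⟨xs.reverse, ?_⟩
      rw [stripA, hd, List.reverse_cons, hx']

theorem stmt13 (C : Set (List Bool)) (hfin : C.Finite) (hpf : PrefixFree C)
    (hmax : ∀ D : Set (List Bool), PrefixFree D → C ⊆ D → D = C)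
    (hne : C ≠ {[]}) :
    ∃ f : List Bool → List Bool,
      (∀ w ∈ Ca C, f w ∈ Pb C ∧ ∃ m : ℕ, w = f w ++ List.replicate m false) ∧
      (∀ w ∈ Ca C, ∀ p ∈ Pb C,
        (∃ m : ℕ, w = p ++ List.replicate m false) → p = f w) ∧
      Set.BijOn f (Ca C) (Pb C) := by
  -- shape of elements of Pb
  have hPbshape : ∀ p ∈ Pb C, p = [] ∨ ∃ u, p = u ++ [true] := by
    intro p hp
    rcases hp with rfl | ⟨_, u, hu⟩
    · left; rfl
    · right; exact ⟨u, hu⟩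
  -- part 1 : mapping into Pb
  have hmap : ∀ w ∈ Ca C, stripA w ∈ Pb C ∧ ∃ m : ℕ, w = stripA w ++ List.replicate m false := by
    intro w hw
    obtain ⟨hwC, u, hu⟩ := hw
    obtain ⟨⟨m, hm⟩, hshape⟩ := stripA_decomp w
    refine ⟨?_, m, hm⟩
    rcases hshape with h0 | ⟨v, hv⟩
    · left; exact h0
    · right
      refine ⟨⟨w, hwC, ⟨List.replicate m false, hm.symm⟩, ?_⟩, v, hv⟩
      intro heq
      rw [heq, hu] at hv
      have := congrArg (fun l => l.getLast?) hv
      simp at this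
  -- part 2 : uniqueness
  have huniq : ∀ w ∈ Ca C, ∀ p ∈ Pb C,
      (∃ m : ℕ, w = p ++ List.replicate m false) → p = stripA w := by
    intro w _ p hp ⟨m, hm⟩
    rw [hm, stripA_spec p m (hPbshape p hp)]
  refine ⟨stripA, hmap, huniq, ?_, ?_, ?_⟩
  · -- MapsTo
    intro w hw; exact (hmap w hw).1
  · -- InjOn
    intro w1 h1 w2 h2 heq
    obtain ⟨m1, hm1⟩ := (hmap w1 h1).2
    obtain ⟨m2, hm2⟩ := (hmap w2 h2).2
    set q := stripA w2 with hq
    rw [heq] at hm1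
    rcases le_total m1 m2 with hle | hle
    · apply hpf w1 h1.1 w2 h2.1
      refine ⟨List.replicate (m2 - m1) false, ?_⟩
      rw [hm1, hm2, List.append_assoc, ← List.replicate_add, Nat.add_sub_cancel' hle]
    · refine (hpf w2 h2.1 w1 h1.1 ?_).symm
      refine ⟨List.replicate (m1 - m2) false, ?_⟩
      rw [hm1, hm2, List.append_assoc, ← List.replicate_add, Nat.add_sub_cancel' hle]
  · -- SurjOn
    -- comparability via maximality
    have hcomp : ∀ u : List Bool, ∃ c ∈ C, c <+: u ∨ u <+: c := by
      intro u
      by_contra h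
      push_neg at h
      have hpfD : PrefixFree (insert u C) := by
        intro x hx y hy hxy
        rcases hx with rfl | hx
        · rcases hy with rfl | hy
          · rfl
          · exact absurd hxy (h y hy).2
        · rcases hy with rfl | hy
          · exact absurd hxy (h x hx).1
          · exact hpf x hx y hy hxy
      have hD := hmax _ hpfD (Set.subset_insert u C)
      have huC : u ∈ C := hD ▸ Set.mem_insert u C
      exact (h u huC).1 (List.prefix_refl u)
    -- bound on lengths
    obtain ⟨n, hn⟩ : ∃ n, ∀ c ∈ C, c.length < n := by
      refine ⟨hfin.toFinset.sup List.length + 1, fun c hc => ?_⟩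
      exact Nat.lt_succ_of_le (Finset.le_sup (hfin.mem_toFinset.mpr hc))
    intro p hp
    obtain ⟨c, hcC, hor⟩ := hcomp (p ++ List.replicate n false)
    have hpu : p <+: p ++ List.replicate n false := ⟨List.replicate n false, rfl⟩
    rcases hor with hcu | huc
    · -- c <+: p ++ a^n
      rcases le_or_gt c.length p.length with hlen | hlen
      · -- c would be a prefix of p : contradiction
        have hcp : c <+: p := List.prefix_of_prefix_length_le hcu hpu hlen
        exfalso
        rcases hPbshape p hp with rfl | ⟨u, hu⟩
        · have hc0 : c = [] := List.prefix_nil.mp hcp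
          subst hc0
          apply hne
          ext x
          constructor
          · intro hx; exact (hpf [] hcC x hx x.nil_prefix).symm
          · intro hx; simp at hx; rwa [hx]
        · have hpPset : p ∈ Pset C := by
            rcases hp with h0 | hmem
            · rw [hu] at h0; simp at h0
            · exact hmem.1
          obtain ⟨c', hc'C, hpc', hpne⟩ := hpPset
          have hcc' : c = c' := hpf c hcC c' hc'C (hcp.trans hpc')
          subst hcc'
          have h1 : c.length ≤ p.length := hlen
          have h2 : p.length ≤ c.length := hpc'.length_le
          have : c = p := hcp.eq_of_length (le_antisymm hlen h2)
          exact hpne (this ▸ rfl)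
      · -- p <+: c, c = p ++ a^k with k ≥ 1
        have hpc : p <+: c := List.prefix_of_prefix_length_le hpu hcu (le_of_lt hlen)
        obtain ⟨t, ht⟩ := hpc
        obtain ⟨k, hk⟩ : ∃ k, t = List.replicate k false := by
          refine ⟨t.length, List.eq_replicate_of_mem ?_⟩
          intro b hb
          have htpre : t <+: List.replicate n false := by
            rw [← ht] at hcu
            exact (List.prefix_append_right_inj p).mp hcu
          exact List.eq_of_mem_replicate (htpre.subset hb)
        have hc_eq : c = p ++ List.replicate k false := by rw [← ht, hk]
        have htlen : 1 ≤ k := by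
          rcases Nat.eq_zero_or_pos k with h0 | h1
          · exfalso
            rw [h0, List.replicate_zero] at hk
            rw [hk, List.append_nil] at ht
            rw [← ht] at hlen
            exact lt_irrefl _ hlen
          · exact h1
        have hcCa : c ∈ Ca C := by
          refine ⟨hcC, p ++ List.replicate (k - 1) false, ?_⟩
          rw [hc_eq, List.append_assoc]
          congr 1
          rw [← List.replicate_succ', Nat.sub_add_cancel htlen]
        refine ⟨c, hcCa, ?_⟩
        rw [hc_eq, stripA_spec p _ (hPbshape p hp)]
    · -- p ++ a^n <+: c : impossible by length
      exfalso
      have := huc.length_le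
      rw [List.length_append, List.length_replicate] at this
      have := hn c hcC
      omega
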